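/- Let φ be a flat ADT formula in negation normal form over a well-defined ADT, and let φ̃ be its reduct obtained by exhaustively applying the reduction rules (1)–(6) at positive positions and conjoining the range constraints In_σ(x̃) for all variables x : σ of φ. Then φ̃ is satisfiable over EUF+LIA (uninterpreted integer functions together with linear integer arithmetic) if and only if φ is satisfiable over the ADT. -/

import Mathlib

/-!
Reduction of ADT constraints to EUF+LIA:
soundness and completeness of the reduction (Theorem 1 of the paper).
-/

/-- An ADT signature: sorts `σ₁,…,σ_k` (modelled as `Fin numSorts`) and
constructors `f₁,…,f_m` (modelled as `Fin numCtors`), each constructor having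
a list of argument sorts and a result sort. -/
structure ADTSig where
  numSorts : ℕ
  numCtors : ℕ
  ctorArgs : Fin numCtors → List (Fin numSorts)
  ctorRes : Fin numCtors → Fin numSorts

namespace ADTSig

/-- Constructor terms of a given sort. -/
inductive Term (S : ADTSig) : Fin S.numSorts → Type where
  | mk (f : Fin S.numCtors)
      (args : (i : Fin (S.ctorArgs f).length) → Term S ((S.ctorArgs f).get i)) :
      Term S (S.ctorRes f)

/-- The head constructor of a constructor term. -/
def Term.head {S : ADTSig} : {σ : Fin S.numSorts} → Term S σ → Fin S.numCtors
  | _, .mk f _ => f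

/-- An ADT is well-defined if every sort has at least one constructor term. -/
def WellDefined (S : ADTSig) : Prop := ∀ σ, Nonempty (S.Term σ)

/-- An interpretation of the selectors: total functions that invert the
constructors on terms with matching head symbol. -/
structure SelInterp (S : ADTSig) where
  sel : (f : Fin S.numCtors) → (i : Fin (S.ctorArgs f).length) →
    S.Term (S.ctorRes f) → S.Term ((S.ctorArgs f).get i)
  sel_mk : ∀ f i args, sel f i (Term.mk f args) = args i

/-- Literals of flat ADT formulas (negation normal form: negation is pushed
into the literals): constructor equations `f(x₁,…,x_n) ≈ x₀`, selector
equations `f^j(x) ≈ y`, positive and negative testers, and (dis)equations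
between variables.  `V σ` is the set of variables of sort `σ`. -/
inductive Lit (S : ADTSig) (V : Fin S.numSorts → Type) where
  | ctorEq (f : Fin S.numCtors)
      (xs : (i : Fin (S.ctorArgs f).length) → V ((S.ctorArgs f).get i))
      (x0 : V (S.ctorRes f))
  | selEq (f : Fin S.numCtors) (j : Fin (S.ctorArgs f).length)
      (x : V (S.ctorRes f)) (y : V ((S.ctorArgs f).get j))
  | tst (f : Fin S.numCtors) (x : V (S.ctorRes f))
  | ntst (f : Fin S.numCtors) (x : V (S.ctorRes f))
  | eqv {σ : Fin S.numSorts} (x y : V σ)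
  | nev {σ : Fin S.numSorts} (x y : V σ)

/-- Flat formulas in negation normal form. -/
inductive Formula (S : ADTSig) (V : Fin S.numSorts → Type) where
  | fls
  | lit (l : Lit S V)
  | and (φ ψ : Formula S V)
  | or (φ ψ : Formula S V)

variable {S : ADTSig} {V : Fin S.numSorts → Type}

/-- ADT semantics of literals, given a selector interpretation `I` and a
variable assignment `β` into the constructor terms. -/
def Lit.holds (I : SelInterp S) (β : (σ : Fin S.numSorts) → V σ → S.Term σ) :
    Lit S V → Prop
  | .ctorEq f xs x0 => Term.mk f (fun i => β _ (xs i)) = β _ x0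
  | .selEq f j x y => I.sel f j (β _ x) = β _ y
  | .tst f x => (β _ x).head = f
  | .ntst f x => (β _ x).head ≠ f
  | .eqv x y => β _ x = β _ y
  | .nev x y => β _ x ≠ β _ y

def Formula.holds (I : SelInterp S) (β : (σ : Fin S.numSorts) → V σ → S.Term σ) :
    Formula S V → Prop
  | .fls => False
  | .lit l => l.holds I β
  | .and φ ψ => φ.holds I β ∧ ψ.holds I β
  | .or φ ψ => φ.holds I β ∨ ψ.holds I β

/-- Satisfiability of an ADT formula over the term structure `(𝕋, I)`. -/
def Formula.ADTSat (φ : Formula S V) : Prop :=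
  ∃ (I : SelInterp S) (β : (σ : Fin S.numSorts) → V σ → S.Term σ), φ.holds I β

/-! ### The EUF+LIA side -/

/-- An EUF+LIA model for the target vocabulary of the reduction: uninterpreted
functions `f̃ : ℤⁿ → ℤ` for the constructors, `f̃^j : ℤ → ℤ` for the selectors,
and `ctorId_σ, depth_σ : ℤ → ℤ` for every sort. -/
structure RModel (S : ADTSig) where
  ctorF : (f : Fin S.numCtors) → (Fin (S.ctorArgs f).length → ℤ) → ℤ
  selF : (f : Fin S.numCtors) → Fin (S.ctorArgs f).length → ℤ → ℤ
  ctorIdF : Fin S.numSorts → ℤ → ℤ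
  depthF : Fin S.numSorts → ℤ → ℤ

/-- The unique index `Id_f` of a constructor among the constructors of its
result sort. -/
def ctorIdx' (S : ADTSig) (f : Fin S.numCtors) : ℤ :=
  ((Finset.univ.filter
      (fun g : Fin S.numCtors => g ≤ f ∧ S.ctorRes g = S.ctorRes f)).card : ℤ)

/-- The range constraint `In_σ(x)`: `0 ≤ x < |𝕋_σ|` if `𝕋_σ` is finite,
and `true` otherwise. -/
def InSort (S : ADTSig) (σ : Fin S.numSorts) (x : ℤ) : Prop :=
  Finite (S.Term σ) → (0 ≤ x ∧ x < (Nat.card (S.Term σ) : ℤ))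

/-- `CtorSpec_f(x₀,…,x_n)`. -/
def CtorSpec (M : RModel S) (f : Fin S.numCtors) (x0 : ℤ)
    (xs : Fin (S.ctorArgs f).length → ℤ) : Prop :=
  M.ctorF f xs = x0 ∧
  M.ctorIdF (S.ctorRes f) x0 = ctorIdx' S f ∧
  ∀ j, M.selF f j x0 = xs j ∧
    M.depthF ((S.ctorArgs f).get j) (xs j) < M.depthF (S.ctorRes f) x0

/-- `ExCtorSpec_f(x)`. -/
def ExCtorSpec (M : RModel S) (f : Fin S.numCtors) (x : ℤ) : Prop :=
  ∃ xs : Fin (S.ctorArgs f).length → ℤ,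
    (∀ j, InSort S ((S.ctorArgs f).get j) (xs j)) ∧ CtorSpec M f x xs

/-- The reduct of a literal: reduction rules (1)–(6) of the paper. -/
def Lit.redHolds (M : RModel S) (β : (σ : Fin S.numSorts) → V σ → ℤ) :
    Lit S V → Prop
  | .ctorEq f xs x0 => CtorSpec M f (β _ x0) (fun i => β _ (xs i))
  | .selEq f j x y => M.selF f j (β _ x) = β _ y ∧
      ∃ g, S.ctorRes g = S.ctorRes f ∧ ExCtorSpec M g (β _ x)
  | .tst f x => ExCtorSpec M f (β _ x)
  | .ntst f x => ∃ g, S.ctorRes g = S.ctorRes f ∧ g ≠ f ∧ ExCtorSpec M g (β _ x)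
  | .eqv x y => β _ x = β _ y
  | .nev x y => β _ x ≠ β _ y

def Formula.redHolds (M : RModel S) (β : (σ : Fin S.numSorts) → V σ → ℤ) :
    Formula S V → Prop
  | .fls => False
  | .lit l => l.redHolds M β
  | .and φ ψ => φ.redHolds M β ∧ ψ.redHolds M β
  | .or φ ψ => φ.redHolds M β ∨ ψ.redHolds M β

/-- Satisfiability (over EUF+LIA) of the reduct `φ̃` of `φ`: the rewritten
formula `φ*` conjoined with the range constraints `In_σ(x̃)` for the
variables. -/
def Formula.RedSat (φ : Formula S V) : Prop :=
  ∃ (M : RModel S) (β : (σ : Fin S.numSorts) → V σ → ℤ),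
    φ.redHolds M β ∧ ∀ σ (x : V σ), InSort S σ (β σ x)

end ADTSig
namespace ADTSig

section Basics
variable {S : ADTSig}

@[simp] theorem Term.head_mk (f : Fin S.numCtors)
    (args : (i : Fin (S.ctorArgs f).length) → Term S ((S.ctorArgs f).get i)) :
    (Term.mk f args).head = f := rfl

@[simp] theorem Term.head_cast {σ σ' : Fin S.numSorts} (h : σ = σ') (t : Term S σ) :
    (h ▸ t : Term S σ').head = t.head := by subst h; rfl

theorem Term.mk_head_eq {σ : Fin S.numSorts} {f g : Fin S.numCtors}
    (hf : S.ctorRes f = σ) (hg : S.ctorRes g = σ)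
    {args : (i : Fin (S.ctorArgs f).length) → Term S ((S.ctorArgs f).get i)}
    {brgs : (i : Fin (S.ctorArgs g).length) → Term S ((S.ctorArgs g).get i)}
    (h : (hf ▸ Term.mk f args : Term S σ) = hg ▸ Term.mk g brgs) : f = g := by
  have := congrArg Term.head h
  rwa [Term.head_cast, Term.head_cast, Term.head_mk, Term.head_mk] at this

theorem Term.mk_inj {f : Fin S.numCtors}
    {args brgs : (i : Fin (S.ctorArgs f).length) → Term S ((S.ctorArgs f).get i)}
    (h : Term.mk f args = Term.mk f brgs) : args = brgs := by
  injection h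

/-- depth of a term -/
noncomputable def Term.depth {σ : Fin S.numSorts} (t : Term S σ) : ℕ :=
  Term.rec (motive := fun _ _ => ℕ) (fun _ _ ih => (Finset.univ.sup ih) + 1) t

theorem Term.depth_mk (f : Fin S.numCtors)
    (args : (i : Fin (S.ctorArgs f).length) → Term S ((S.ctorArgs f).get i)) :
    (Term.mk f args).depth = (Finset.univ.sup fun i => (args i).depth) + 1 := rfl

theorem Term.depth_arg_lt (f : Fin S.numCtors)
    (args : (i : Fin (S.ctorArgs f).length) → Term S ((S.ctorArgs f).get i))
    (j : Fin (S.ctorArgs f).length) :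
    (args j).depth < (Term.mk f args).depth := by
  rw [Term.depth_mk]
  exact Nat.lt_succ_of_le (Finset.le_sup (f := fun i => (args i).depth) (Finset.mem_univ j))

theorem Term.depth_pos {σ : Fin S.numSorts} (t : Term S σ) : 0 < t.depth := by
  cases t with
  | mk f args => rw [Term.depth_mk]; exact Nat.succ_pos _

@[simp] theorem Term.depth_cast {σ σ' : Fin S.numSorts} (h : σ = σ') (t : Term S σ) :
    (h ▸ t : Term S σ').depth = t.depth := by subst h; rfl

end Basics
end ADTSig
namespace ADTSig
section Basics2
variable {S : ADTSig}

/-- the argument tuple of a term. -/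
def Term.argsD {σ : Fin S.numSorts} :
    (t : Term S σ) → ∀ i : Fin (S.ctorArgs t.head).length, Term S ((S.ctorArgs t.head).get i) :=
  fun t => Term.casesOn
    (motive := fun _ t => ∀ i : Fin (S.ctorArgs t.head).length, Term S ((S.ctorArgs t.head).get i))
    t (fun _ args => args)

@[simp] theorem Term.argsD_mk (f : Fin S.numCtors)
    (args : (i : Fin (S.ctorArgs f).length) → Term S ((S.ctorArgs f).get i)) :
    (Term.mk f args).argsD = args := rfl

theorem Term.ctorRes_head {σ : Fin S.numSorts} (t : Term S σ) : S.ctorRes t.head = σ := by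
  cases t; rfl

/-- head+args determine the term. -/
theorem Term.eq_of_sig' {σ τ : Fin S.numSorts} (hστ : σ = τ) (t : Term S σ) (t' : Term S τ)
    (h : (⟨t.head, t.argsD⟩ : Σ f : Fin S.numCtors,
        ∀ i : Fin (S.ctorArgs f).length, Term S ((S.ctorArgs f).get i)) = ⟨t'.head, t'.argsD⟩) :
    t = hστ.symm ▸ t' := by
  cases t with
  | mk f args =>
    cases t' with
    | mk g brgs =>
      simp only [Term.head_mk, Term.argsD_mk] at h
      obtain ⟨h1, h2⟩ := Sigma.mk.inj_iff.mp h
      subst h1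
      have h3 : args = brgs := eq_of_heq h2
      subst h3
      rfl

theorem Term.eq_of_sig {σ : Fin S.numSorts} (t t' : Term S σ)
    (h : (⟨t.head, t.argsD⟩ : Σ f : Fin S.numCtors,
        ∀ i : Fin (S.ctorArgs f).length, Term S ((S.ctorArgs f).get i)) = ⟨t'.head, t'.argsD⟩) :
    t = t' := Term.eq_of_sig' rfl t t' h

theorem Term.depth_argsD_lt {σ : Fin S.numSorts} (t : Term S σ)
    (i : Fin (S.ctorArgs t.head).length) : (t.argsD i).depth < t.depth := by
  cases t with
  | mk f args => simpa using Term.depth_arg_lt f args i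

theorem finite_depth_le (n : ℕ) :
    ∀ σ : Fin S.numSorts, Finite {t : Term S σ // t.depth ≤ n} := by
  induction n with
  | zero =>
    intro σ
    have : IsEmpty {t : Term S σ // t.depth ≤ 0} := by
      constructor; rintro ⟨t, ht⟩
      have := t.depth_pos; omega
    infer_instance
  | succ n ih =>
    intro σ
    have hfin : ∀ τ, Finite {t : Term S τ // t.depth ≤ n} := ih
    let F : {t : Term S σ // t.depth ≤ n + 1} →
        Σ f : Fin S.numCtors, ∀ i : Fin (S.ctorArgs f).length,
          {t : Term S ((S.ctorArgs f).get i) // t.depth ≤ n} :=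
      fun x => ⟨x.1.head, fun i => ⟨x.1.argsD i, by
        have := x.1.depth_argsD_lt i; have := x.2; omega⟩⟩
    have hF : Function.Injective F := by
      rintro ⟨t, ht⟩ ⟨t', ht'⟩ h
      simp only [F] at h
      have h' := congrArg (fun y : (Σ f : Fin S.numCtors,
          ∀ i : Fin (S.ctorArgs f).length, {t : Term S ((S.ctorArgs f).get i) // t.depth ≤ n}) =>
          (⟨y.1, fun i => (y.2 i).1⟩ : Σ f : Fin S.numCtors,
          ∀ i : Fin (S.ctorArgs f).length, Term S ((S.ctorArgs f).get i))) h
      have : t = t' := Term.eq_of_sig _ _ h'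
      subst this; rfl
    exact Finite.of_injective F hF

theorem exists_depth_gt (σ : Fin S.numSorts) (hinf : ¬ Finite (Term S σ)) (b : ℕ) :
    ∃ t : Term S σ, b < t.depth := by
  by_contra hc
  push_neg at hc
  have := finite_depth_le (S := S) b σ
  exact hinf (Finite.of_injective
    (fun t : Term S σ => (⟨t, hc t⟩ : {t : Term S σ // t.depth ≤ b}))
    (by intro a b h; exact congrArg Subtype.val h))

end Basics2
end ADTSig
namespace ADTSig
section Basics3
variable {S : ADTSig}

/-- injective coding of terms into ℕ -/
noncomputable def Term.code {σ : Fin S.numSorts} (t : Term S σ) : ℕ :=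
  Term.rec (motive := fun _ _ => ℕ)
    (fun f _ ih => Nat.pair f.val (Encodable.encode (List.ofFn ih))) t

theorem Term.code_mk (f : Fin S.numCtors)
    (args : (i : Fin (S.ctorArgs f).length) → Term S ((S.ctorArgs f).get i)) :
    (Term.mk f args).code
      = Nat.pair f.val (Encodable.encode (List.ofFn fun i => (args i).code)) := rfl

theorem Term.code_injective (σ : Fin S.numSorts) :
    Function.Injective (fun t : Term S σ => t.code) := by
  suffices H : ∀ (σ : Fin S.numSorts) (t : Term S σ) (τ : Fin S.numSorts) (t' : Term S τ),
      σ = τ → t.code = t'.code → HEq t t' by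
    intro a b h
    exact eq_of_heq (H σ a σ b rfl h)
  intro σ t
  induction t with
  | mk f args ih =>
    intro τ t'
    cases t' with
    | mk g brgs =>
      intro hst hcode
      rw [Term.code_mk, Term.code_mk] at hcode
      obtain ⟨hfg, hrest⟩ := Nat.pair_eq_pair.mp hcode
      have hfg' : f = g := Fin.val_injective hfg
      subst hfg'
      have hlist : (List.ofFn fun i => (args i).code) = (List.ofFn fun i => (brgs i).code) :=
        Encodable.encode_injective hrest
      have hfun := List.ofFn_injective hlist
      have : args = brgs := by
        funext i
        exact eq_of_heq (ih i ((S.ctorArgs f).get i) (brgs i) rfl (congrFun hfun i))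
      subst this
      rfl

/-- `ctorIdx` is strictly monotone on constructors of the same sort. -/
theorem ctorIdx_lt {f g : Fin S.numCtors} (hres : S.ctorRes f = S.ctorRes g)
    (hlt : f < g) : ctorIdx' S f < ctorIdx' S g := by
  have hsub : (Finset.univ.filter (fun k : Fin S.numCtors => k ≤ f ∧ S.ctorRes k = S.ctorRes f)) ⊆
      (Finset.univ.filter (fun k : Fin S.numCtors => k ≤ g ∧ S.ctorRes k = S.ctorRes g)) := by
    intro k hk
    simp only [Finset.mem_filter, Finset.mem_univ, true_and] at hk ⊢
    exact ⟨le_trans hk.1 (le_of_lt hlt), hk.2.trans hres⟩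
  have hmem : g ∈ (Finset.univ.filter (fun k : Fin S.numCtors => k ≤ g ∧ S.ctorRes k = S.ctorRes g)) := by
    simp
  have hnmem : g ∉ (Finset.univ.filter (fun k : Fin S.numCtors => k ≤ f ∧ S.ctorRes k = S.ctorRes f)) := by
    simp only [Finset.mem_filter, Finset.mem_univ, true_and, not_and]
    intro hle; exact absurd (lt_of_lt_of_le hlt hle) (lt_irrefl f)
  have hcard := Finset.card_lt_card (Finset.ssubset_iff_of_subset hsub |>.mpr ⟨g, hmem, hnmem⟩)
  unfold ctorIdx'
  exact_mod_cast hcard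

theorem ctorIdx_injOn {f g : Fin S.numCtors} (hres : S.ctorRes f = S.ctorRes g)
    (h : ctorIdx' S f = ctorIdx' S g) : f = g := by
  rcases lt_trichotomy f g with hlt | heq | hgt
  · exact absurd h (ne_of_lt (ctorIdx_lt hres hlt))
  · exact heq
  · exact absurd h.symm (ne_of_lt (ctorIdx_lt hres.symm hgt))

/-- The unique constructor witnessing `ExCtorSpec` at a value. -/
theorem exCtorSpec_unique {M : RModel S} {f g : Fin S.numCtors} {v : ℤ}
    (hres : S.ctorRes f = S.ctorRes g)
    (hf : ExCtorSpec M f v) (hg : ExCtorSpec M g v) : f = g := by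
  obtain ⟨xs, _, _, hidf, _⟩ := hf
  obtain ⟨ys, _, _, hidg, _⟩ := hg
  apply ctorIdx_injOn hres
  rw [← hidf, hres, hidg]

end Basics3
end ADTSig
namespace ADTSig
section Completeness
variable {S : ADTSig}

/-- injective integer coding of terms, landing in the window for finite sorts. -/
noncomputable def enc (σ : Fin S.numSorts) (t : Term S σ) : ℤ :=
  haveI := Classical.dec (Finite (Term S σ))
  if h : Finite (Term S σ) then ((Finite.equivFin (Term S σ)).toFun t : ℤ)
  else (t.code : ℤ)

theorem enc_injective (σ : Fin S.numSorts) : Function.Injective (enc σ) := by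
  haveI := Classical.dec (Finite (Term S σ))
  unfold enc
  split
  · intro a b h
    simp only [Int.natCast_inj] at h
    exact (Finite.equivFin (Term S σ)).injective (Fin.val_injective h)
  · intro a b h
    simp only [Int.natCast_inj] at h
    exact Term.code_injective σ h

theorem enc_inSort (σ : Fin S.numSorts) (t : Term S σ) : InSort S σ (enc σ t) := by
  intro hfin
  haveI := Classical.dec (Finite (Term S σ))
  unfold enc
  rw [dif_pos hfin]
  constructor
  · exact_mod_cast Nat.zero_le _
  · exact_mod_cast ((Finite.equivFin (Term S σ)).toFun t).isLt

noncomputable def dec (hS : S.WellDefined) (σ : Fin S.numSorts) (x : ℤ) : Term S σ :=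
  haveI : Nonempty (Term S σ) := hS σ
  Function.invFun (enc σ) x

theorem dec_enc (hS : S.WellDefined) (σ : Fin S.numSorts) (t : Term S σ) :
    dec hS σ (enc σ t) = t := by
  haveI : Nonempty (Term S σ) := hS σ
  exact Function.leftInverse_invFun (enc_injective σ) t

/-- the reduct model induced by a term model. -/
noncomputable def rmodelOf (hS : S.WellDefined) (I : SelInterp S) : RModel S where
  ctorF := fun f xs => enc _ (Term.mk f fun i => dec hS _ (xs i))
  selF := fun f j x => enc _ (I.sel f j (dec hS _ x))
  ctorIdF := fun σ x => ctorIdx' S ((dec hS σ x).head)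
  depthF := fun σ x => ((dec hS σ x).depth : ℤ)

theorem ctorSpec_enc (hS : S.WellDefined) (I : SelInterp S) (f : Fin S.numCtors)
    (args : (i : Fin (S.ctorArgs f).length) → Term S ((S.ctorArgs f).get i)) :
    CtorSpec (rmodelOf hS I) f (enc _ (Term.mk f args)) (fun i => enc _ (args i)) := by
  refine ⟨?_, ?_, ?_⟩
  · show enc _ (Term.mk f fun i => dec hS _ (enc _ (args i))) = _
    refine congrArg (enc _) (congrArg (fun a => Term.mk f a) ?_)
    funext i
    rw [dec_enc]
  · show ctorIdx' S ((dec hS _ (enc _ (Term.mk f args))).head) = _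
    rw [dec_enc, Term.head_mk]
  · intro j
    constructor
    · show enc _ (I.sel f j (dec hS _ (enc _ (Term.mk f args)))) = _
      rw [dec_enc, I.sel_mk]
    · show ((dec hS _ (enc _ (args j))).depth : ℤ) < ((dec hS _ (enc _ (Term.mk f args))).depth : ℤ)
      rw [dec_enc, dec_enc]
      exact_mod_cast Term.depth_arg_lt f args j

theorem exCtorSpec_enc (hS : S.WellDefined) (I : SelInterp S) {σ : Fin S.numSorts} (t : Term S σ) :
    ∃ g, S.ctorRes g = σ ∧ t.head = g ∧ ExCtorSpec (rmodelOf hS I) g (enc σ t) := by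
  cases t with
  | mk f args =>
    exact ⟨f, rfl, rfl, fun i => enc _ (args i), fun j => enc_inSort _ _, ctorSpec_enc hS I f args⟩

variable {V : Fin S.numSorts → Type}

theorem lit_redHolds_of_holds (hS : S.WellDefined) (I : SelInterp S)
    (β : (σ : Fin S.numSorts) → V σ → Term S σ) (l : Lit S V)
    (h : l.holds I β) : l.redHolds (rmodelOf hS I) (fun σ x => enc σ (β σ x)) := by
  cases l with
  | ctorEq f xs x0 =>
    show CtorSpec _ f (enc _ (β _ x0)) (fun i => enc _ (β _ (xs i)))
    have h' : Term.mk f (fun i => β _ (xs i)) = β _ x0 := h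
    rw [← h']
    exact ctorSpec_enc hS I f _
  | selEq f j x y =>
    have h' : I.sel f j (β _ x) = β _ y := h
    constructor
    · show enc _ (I.sel f j (dec hS _ (enc _ (β _ x)))) = _
      rw [dec_enc, h']
    · obtain ⟨g, hg, _, hex⟩ := exCtorSpec_enc hS I (β _ x)
      exact ⟨g, hg, hex⟩
  | tst f x =>
    have h' : (β _ x).head = f := h
    obtain ⟨g, hg, hhead, hex⟩ := exCtorSpec_enc hS I (β _ x)
    have hgf : g = f := hhead.symm.trans h'
    subst hgf
    exact hex
  | ntst f x =>
    have h' : (β _ x).head ≠ f := h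
    obtain ⟨g, hg, hhead, hex⟩ := exCtorSpec_enc hS I (β _ x)
    exact ⟨g, hg, by rw [← hhead]; exact h', hex⟩
  | eqv x y => exact congrArg _ (h : β _ x = β _ y)
  | nev x y => exact fun hc => (h : β _ x ≠ β _ y) (enc_injective _ hc)

theorem redSat_of_adtSat (hS : S.WellDefined) (φ : Formula S V) (hsat : φ.ADTSat) : φ.RedSat := by
  obtain ⟨I, β, hold⟩ := hsat
  refine ⟨rmodelOf hS I, fun σ x => enc σ (β σ x), ?_, fun σ x => enc_inSort σ (β σ x)⟩
  induction φ with
  | fls => exact hold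
  | lit l => exact lit_redHolds_of_holds hS I β l hold
  | and φ ψ ihφ ihψ => exact ⟨ihφ hold.1, ihψ hold.2⟩
  | or φ ψ ihφ ihψ =>
    cases hold with
    | inl h => exact Or.inl (ihφ h)
    | inr h => exact Or.inr (ihψ h)

end Completeness
end ADTSig
namespace ADTSig
section Sound1
variable {S : ADTSig}

/-- `mk` with a cast of the result sort. -/
def mkCast {σ : Fin S.numSorts} (f : Fin S.numCtors) (h : S.ctorRes f = σ)
    (args : (i : Fin (S.ctorArgs f).length) → Term S ((S.ctorArgs f).get i)) : Term S σ :=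
  h ▸ Term.mk f args

@[simp] theorem head_mkCast {σ : Fin S.numSorts} (f : Fin S.numCtors) (h : S.ctorRes f = σ)
    (args : (i : Fin (S.ctorArgs f).length) → Term S ((S.ctorArgs f).get i)) :
    (mkCast f h args).head = f := by subst h; rfl

@[simp] theorem depth_mkCast {σ : Fin S.numSorts} (f : Fin S.numCtors) (h : S.ctorRes f = σ)
    (args : (i : Fin (S.ctorArgs f).length) → Term S ((S.ctorArgs f).get i)) :
    (mkCast f h args).depth = (Finset.univ.sup fun i => (args i).depth) + 1 := by
  subst h; rfl

theorem mkCast_head_eq {σ : Fin S.numSorts} {f g : Fin S.numCtors}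
    (hf : S.ctorRes f = σ) (hg : S.ctorRes g = σ)
    {args : (i : Fin (S.ctorArgs f).length) → Term S ((S.ctorArgs f).get i)}
    {brgs : (i : Fin (S.ctorArgs g).length) → Term S ((S.ctorArgs g).get i)}
    (h : mkCast f hf args = mkCast g hg brgs) : f = g := Term.mk_head_eq hf hg h

theorem mkCast_inj {σ : Fin S.numSorts} {f : Fin S.numCtors}
    (hf hf' : S.ctorRes f = σ)
    {args brgs : (i : Fin (S.ctorArgs f).length) → Term S ((S.ctorArgs f).get i)}
    (h : mkCast f hf args = mkCast f hf' brgs) : args = brgs := by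
  subst hf
  exact Term.mk_inj h

theorem mkCast_rfl (f : Fin S.numCtors)
    (args : (i : Fin (S.ctorArgs f).length) → Term S ((S.ctorArgs f).get i)) :
    mkCast f rfl args = Term.mk f args := rfl

variable {V : Fin S.numSorts → Type}

/-- variables of a literal. -/
def Lit.lvars : Lit S V → Set ((σ : Fin S.numSorts) × V σ)
  | .ctorEq _ xs x0 => insert ⟨_, x0⟩ (Set.range fun i => ⟨_, xs i⟩)
  | .selEq _ _ x y => {⟨_, x⟩, ⟨_, y⟩}
  | .tst _ x => {⟨_, x⟩}
  | .ntst _ x => {⟨_, x⟩}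
  | .eqv x y => {⟨_, x⟩, ⟨_, y⟩}
  | .nev x y => {⟨_, x⟩, ⟨_, y⟩}

/-- variables of a formula. -/
def Formula.fvars : Formula S V → Set ((σ : Fin S.numSorts) × V σ)
  | .fls => ∅
  | .lit l => l.lvars
  | .and φ ψ => φ.fvars ∪ ψ.fvars
  | .or φ ψ => φ.fvars ∪ ψ.fvars

theorem Lit.lvars_finite (l : Lit S V) : l.lvars.Finite := by
  cases l with
  | ctorEq f xs x0 => exact (Set.finite_range _).insert _
  | selEq f j x y => exact (Set.finite_singleton _).insert _
  | tst f x => exact Set.finite_singleton _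
  | ntst f x => exact Set.finite_singleton _
  | eqv x y => exact (Set.finite_singleton _).insert _
  | nev x y => exact (Set.finite_singleton _).insert _

theorem Formula.fvars_finite (φ : Formula S V) : φ.fvars.Finite := by
  induction φ with
  | fls => exact Set.finite_empty
  | lit l => exact l.lvars_finite
  | and φ ψ ihφ ihψ => exact ihφ.union ihψ
  | or φ ψ ihφ ihψ => exact ihφ.union ihψ

/-- the window of allowed integer values for a sort. -/
def window (S : ADTSig) (σ : Fin S.numSorts) : Set ℤ :=
  Set.Ico 0 ((Nat.card (Term S σ) : ℤ))

theorem mem_window_of_inSort {σ : Fin S.numSorts} {v : ℤ} (h : InSort S σ v)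
    (hfin : Finite (Term S σ)) : v ∈ window S σ := by
  obtain ⟨h1, h2⟩ := h hfin
  exact ⟨h1, h2⟩

/-- a bound on the depths of terms of a sort (trivial for infinite sorts). -/
noncomputable def bnd (S : ADTSig) (σ : Fin S.numSorts) : ℕ :=
  sSup (Set.range (Term.depth : Term S σ → ℕ))

theorem depth_le_bnd {σ : Fin S.numSorts} (hfin : Finite (Term S σ)) (t : Term S σ) :
    t.depth ≤ bnd S σ := by
  have : (Set.range (Term.depth : Term S σ → ℕ)).Finite := Set.finite_range _
  exact le_csSup this.bddAbove ⟨t, rfl⟩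

theorem bnd_mem (hS : S.WellDefined) {σ : Fin S.numSorts} (hfin : Finite (Term S σ)) :
    ∃ t : Term S σ, t.depth = bnd S σ := by
  have hfin' : (Set.range (Term.depth : Term S σ → ℕ)).Finite := Set.finite_range _
  have hne : (Set.range (Term.depth : Term S σ → ℕ)).Nonempty := ⟨(hS σ).some.depth, _, rfl⟩
  obtain ⟨t, ht⟩ := Nat.sSup_mem hne hfin'.bddAbove
  exact ⟨t, ht⟩

/-- the argument sorts of a constructor of a finite sort are finite. -/
theorem finite_arg (hS : S.WellDefined) {f : Fin S.numCtors}
    (hfin : Finite (Term S (S.ctorRes f))) (j : Fin (S.ctorArgs f).length) :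
    Finite (Term S ((S.ctorArgs f).get j)) := by
  refine Finite.of_injective
    (fun t => Term.mk f (Function.update (fun i => (hS _).some) j t)) ?_
  intro a b h
  have := congrFun (Term.mk_inj h) j
  simpa using this

theorem bnd_arg_lt (hS : S.WellDefined) {f : Fin S.numCtors}
    (hfin : Finite (Term S (S.ctorRes f))) (j : Fin (S.ctorArgs f).length) :
    bnd S ((S.ctorArgs f).get j) < bnd S (S.ctorRes f) := by
  haveI := finite_arg hS hfin j
  obtain ⟨t0, ht0⟩ := bnd_mem hS (σ := (S.ctorArgs f).get j) inferInstance
  rw [← ht0]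
  calc t0.depth < (Term.mk f (Function.update (fun i => (hS _).some) j t0)).depth := by
        have := Term.depth_arg_lt f (Function.update (fun i => (hS _).some) j t0) j
        simpa using this
    _ ≤ bnd S (S.ctorRes f) := depth_le_bnd hfin _

/-- a global bound on depths of terms of finite sorts. -/
noncomputable def Dbase (S : ADTSig) : ℕ := Finset.univ.sup (bnd S)

theorem depth_le_Dbase {σ : Fin S.numSorts} (hfin : Finite (Term S σ)) (t : Term S σ) :
    t.depth ≤ Dbase S :=
  le_trans (depth_le_bnd hfin t) (Finset.le_sup (Finset.mem_univ σ))

end Sound1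
end ADTSig
namespace ADTSig
section Sound2
variable {S : ADTSig}

theorem window_encard {σ : Fin S.numSorts} (hfin : Finite (Term S σ)) :
    (window S σ).encard = (Nat.card (Term S σ) : ℕ∞) := by
  have h1 : window S σ = ↑(Finset.Ico (0 : ℤ) ((Nat.card (Term S σ) : ℤ))) := by
    rw [Finset.coe_Ico]; rfl
  rw [h1, Set.encard_coe_eq_coe_finsetCard, Int.card_Ico]
  simp

theorem univ_encard {σ : Fin S.numSorts} (hfin : Finite (Term S σ)) :
    (Set.univ : Set (Term S σ)).encard = (Nat.card (Term S σ) : ℕ∞) := by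
  haveI := Fintype.ofFinite (Term S σ)
  rw [Set.encard_univ, ENat.card_eq_coe_fintype_card, Nat.card_eq_fintype_card]

/-- extension of an injective partial map on the window to an injective map. -/
theorem extend_injOn (hS : S.WellDefined) {σ : Fin S.numSorts} (hfin : Finite (Term S σ))
    (A : Set ℤ) (hA : A ⊆ window S σ) (u : ℤ → Term S σ) (hu : Set.InjOn u A) :
    ∃ g : ℤ → Term S σ, Set.InjOn g (window S σ) ∧ Set.EqOn g u A := by
  classical
  haveI : Nonempty (Term S σ) := hS σ
  have hwfin : (window S σ).Finite := by
    rw [show window S σ = ↑(Finset.Ico (0 : ℤ) ((Nat.card (Term S σ) : ℤ))) by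
      rw [Finset.coe_Ico]; rfl]
    exact Finset.finite_toSet _
  have hAfin : A.Finite := hwfin.subset hA
  -- cardinality comparison
  have him : ((Set.univ : Set (Term S σ)) \ (u '' A)).encard + (u '' A).encard
      = (Set.univ : Set (Term S σ)).encard :=
    Set.encard_diff_add_encard_of_subset (Set.subset_univ _)
  have hwin : ((window S σ) \ A).encard + A.encard = (window S σ).encard :=
    Set.encard_diff_add_encard_of_subset hA
  have himA : (u '' A).encard = A.encard := hu.encard_image
  have hle : ((window S σ) \ A).encard ≤ ((Set.univ : Set (Term S σ)) \ (u '' A)).encard := by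
    have h2 : (window S σ).encard ≤ (Set.univ : Set (Term S σ)).encard := by
      rw [window_encard hfin, univ_encard hfin]
    have hAtop : A.encard ≠ ⊤ := hAfin.encard_lt_top.ne
    have h3 : ((window S σ) \ A).encard + A.encard
        ≤ ((Set.univ : Set (Term S σ)) \ (u '' A)).encard + A.encard := by
      rw [hwin, ← himA, him]
      exact h2
    exact (WithTop.add_le_add_iff_right hAtop).mp h3
  obtain ⟨e, he1, he2⟩ := Set.Finite.exists_injOn_of_encard_le (hwfin.diff : (window S σ \ A).Finite) hle
  refine ⟨fun v => if hv : v ∈ A then u v else e v, ?_, ?_⟩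
  · intro v hv w hw h
    simp only at h
    by_cases hvA : v ∈ A <;> by_cases hwA : w ∈ A
    · rw [dif_pos hvA, dif_pos hwA] at h; exact hu hvA hwA h
    · rw [dif_pos hvA, dif_neg hwA] at h
      exfalso
      have : e w ∈ (Set.univ : Set (Term S σ)) \ (u '' A) := he1 ⟨hw, hwA⟩
      exact this.2 ⟨v, hvA, h⟩
    · rw [dif_neg hvA, dif_pos hwA] at h
      exfalso
      have : e v ∈ (Set.univ : Set (Term S σ)) \ (u '' A) := he1 ⟨hv, hvA⟩
      exact this.2 ⟨w, hwA, h.symm⟩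
    · rw [dif_neg hvA, dif_neg hwA] at h
      exact he2 ⟨hv, hvA⟩ ⟨hw, hwA⟩ h
  · intro v hv
    simp [hv]

end Sound2
end ADTSig
namespace ADTSig
section Sound3
variable {S : ADTSig}

theorem mkCast_congr {σ : Fin S.numSorts} {f g : Fin S.numCtors} (hfg : f = g)
    (hf : S.ctorRes f = σ) (hg : S.ctorRes g = σ)
    {args : ∀ i : Fin (S.ctorArgs f).length, Term S ((S.ctorArgs f).get i)}
    {brgs : ∀ i : Fin (S.ctorArgs g).length, Term S ((S.ctorArgs g).get i)}
    (h : HEq args brgs) : mkCast f hf args = mkCast g hg brgs := by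
  subst hfg
  subst hf
  rw [eq_of_heq h]

/-- value of a constructor application determined through `CtorSpec`. -/
theorem val_eq_of_exCtorSpec {M : RModel S} {f : Fin S.numCtors} {v w : ℤ}
    (hv : ExCtorSpec M f v) (hw : ExCtorSpec M f w)
    (h : ∀ j, M.selF f j v = M.selF f j w) : v = w := by
  obtain ⟨xs, _, hxs1, _, hxs3⟩ := hv
  obtain ⟨ys, _, hys1, _, hys3⟩ := hw
  have : xs = ys := by
    funext j
    rw [← (hxs3 j).1, ← (hys3 j).1, h j]
  rw [← hxs1, ← hys1, this]

/-- selector values of an `ExCtorSpec` value are in-sort. -/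
theorem selF_inSort {M : RModel S} {f : Fin S.numCtors} {v : ℤ}
    (hv : ExCtorSpec M f v) (j : Fin (S.ctorArgs f).length) :
    InSort S ((S.ctorArgs f).get j) (M.selF f j v) := by
  obtain ⟨xs, hIn, _, _, h3⟩ := hv
  rw [(h3 j).1]
  exact hIn j

/-- construction of the assignment on finite sorts. -/
theorem lemmaFin (hS : S.WellDefined) (M : RModel S) :
    ∃ TT : ∀ σ, ℤ → Term S σ, ∀ σ, Finite (Term S σ) →
      Set.InjOn (TT σ) (window S σ) ∧
      ∀ v ∈ window S σ, ∀ f (hres : S.ctorRes f = σ), ExCtorSpec M f v →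
        TT σ v = mkCast f hres (fun j => TT _ (M.selF f j v)) := by
  classical
  suffices H : ∀ n : ℕ, ∃ TT : ∀ σ, ℤ → Term S σ, ∀ σ, Finite (Term S σ) → bnd S σ < n →
      Set.InjOn (TT σ) (window S σ) ∧
      ∀ v ∈ window S σ, ∀ f (hres : S.ctorRes f = σ), ExCtorSpec M f v →
        TT σ v = mkCast f hres (fun j => TT _ (M.selF f j v)) by
    obtain ⟨TT, hTT⟩ := H (Finset.univ.sup (bnd S) + 1)
    exact ⟨TT, fun σ hfin => hTT σ hfin (Nat.lt_succ_of_le (Finset.le_sup (Finset.mem_univ σ)))⟩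
  intro n
  induction n with
  | zero => exact ⟨fun σ _ => (hS σ).some, fun σ _ h => absurd h (Nat.not_lt_zero _)⟩
  | succ n IH =>
    obtain ⟨TT, hTT⟩ := IH
    -- the forced partial map at level n
    set u : ∀ σ : Fin S.numSorts, ℤ → Term S σ := fun σ v =>
      if hv : ∃ f, S.ctorRes f = σ ∧ ExCtorSpec M f v then
        mkCast hv.choose hv.choose_spec.1 (fun j => TT _ (M.selF hv.choose j v))
      else (hS σ).some with hu
    have ukey : ∀ σ v (f : Fin S.numCtors) (hres : S.ctorRes f = σ), ExCtorSpec M f v →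
        u σ v = mkCast f hres (fun j => TT _ (M.selF f j v)) := by
      intro σ v f hres hex
      have hc : ∃ f, S.ctorRes f = σ ∧ ExCtorSpec M f v := ⟨f, hres, hex⟩
      have hcf : hc.choose = f :=
        exCtorSpec_unique (hc.choose_spec.1.trans hres.symm) hc.choose_spec.2 hex
      subst hcf
      simp only [hu]
      rw [dif_pos hc]
    -- the set of forced values at a sort
    set A : ∀ _ : Fin S.numSorts, Set ℤ := fun σ =>
      {v | v ∈ window S σ ∧ ∃ f, S.ctorRes f = σ ∧ ExCtorSpec M f v} with hA
    have uinj : ∀ σ, Finite (Term S σ) → bnd S σ = n → Set.InjOn (u σ) (A σ) := by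
      intro σ hfin hb v hv w hw huvw
      obtain ⟨hvwin, f, hfres, hfex⟩ := hv
      obtain ⟨hwwin, g, hgres, hgex⟩ := hw
      rw [ukey σ v f hfres hfex, ukey σ w g hgres hgex] at huvw
      have hfg : f = g := mkCast_head_eq hfres hgres huvw
      subst hfg
      have hargs := mkCast_inj hfres hgres huvw
      refine val_eq_of_exCtorSpec hfex hgex ?_
      intro j
      -- kid sort properties
      haveI hkfin : Finite (Term S ((S.ctorArgs f).get j)) := by
        haveI : Finite (Term S (S.ctorRes f)) := by rw [hfres]; exact hfin
        exact finite_arg hS inferInstance j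
      have hkb : bnd S ((S.ctorArgs f).get j) < n := by
        have := bnd_arg_lt hS (f := f) (by rw [hfres]; exact hfin) j
        rw [hfres, hb] at this
        exact this
      have hkinj := (hTT _ hkfin hkb).1
      have h1 : TT _ (M.selF f j v) = TT _ (M.selF f j w) := congrFun hargs j
      exact hkinj (mem_window_of_inSort (selF_inSort hfex j) hkfin)
        (mem_window_of_inSort (selF_inSort hgex j) hkfin) h1
    -- the extension at each sort of level n
    have hext : ∀ σ, Finite (Term S σ) → bnd S σ = n →
        ∃ g : ℤ → Term S σ, Set.InjOn g (window S σ) ∧ Set.EqOn g (u σ) (A σ) := by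
      intro σ hfin hb
      exact extend_injOn hS hfin (A σ) (fun v hv => hv.1) (u σ) (uinj σ hfin hb)
    set TT' : ∀ σ : Fin S.numSorts, ℤ → Term S σ := fun σ =>
      if h : Finite (Term S σ) ∧ bnd S σ = n then (hext σ h.1 h.2).choose else TT σ with hTT'
    have TT'_eq_low : ∀ σ, bnd S σ ≠ n → TT' σ = TT σ := by
      intro σ hne
      simp only [hTT']
      rw [dif_neg (by tauto)]
    refine ⟨TT', ?_⟩
    intro σ hfin hblt
    by_cases hb : bnd S σ = n
    · have hTT'σ : TT' σ = (hext σ hfin hb).choose := by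
        simp only [hTT']
        rw [dif_pos ⟨hfin, hb⟩]
      obtain ⟨hginj, hgeq⟩ := (hext σ hfin hb).choose_spec
      constructor
      · rw [hTT'σ]; exact hginj
      · intro v hvwin f hres hex
        rw [hTT'σ]
        have hvA : v ∈ A σ := ⟨hvwin, f, hres, hex⟩
        rw [hgeq hvA, ukey σ v f hres hex]
        refine mkCast_congr rfl hres hres (heq_of_eq ?_)
        funext j
        have hkb : bnd S ((S.ctorArgs f).get j) ≠ n := by
          have := bnd_arg_lt hS (f := f) (by rw [hres]; exact hfin) j
          rw [hres, hb] at this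
          omega
        rw [TT'_eq_low _ hkb]
    · have hblt' : bnd S σ < n := by omega
      rw [TT'_eq_low σ hb]
      obtain ⟨hinj, hforce⟩ := hTT σ hfin hblt'
      refine ⟨hinj, ?_⟩
      intro v hvwin f hres hex
      rw [hforce v hvwin f hres hex]
      refine mkCast_congr rfl hres hres (heq_of_eq ?_)
      funext j
      have hkb : bnd S ((S.ctorArgs f).get j) ≠ n := by
        have := bnd_arg_lt hS (f := f) (by rw [hres]; exact hfin) j
        rw [hres] at this
        omega
      rw [TT'_eq_low _ hkb]

end Sound3
end ADTSig
namespace ADTSig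
section Sound4
variable {S : ADTSig} {V : Fin S.numSorts → Type}
variable (hS : S.WellDefined) (M : RModel S)
variable (β : (σ : Fin S.numSorts) → V σ → ℤ) (VS : Set ((σ : Fin S.numSorts) × V σ))

/-- relevant values of a sort. -/
def RelVal (σ : Fin S.numSorts) : Set ℤ := {v | ∃ x : V σ, ⟨σ, x⟩ ∈ VS ∧ β σ x = v}

theorem relVal_finite (hVS : VS.Finite) (σ : Fin S.numSorts) : (RelVal β VS σ).Finite := by
  have heq : RelVal β VS σ = (β σ) '' (Sigma.mk σ ⁻¹' VS) := by
    ext v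
    simp [RelVal, Set.mem_image]
  rw [heq]
  exact ((hVS.preimage sigma_mk_injective.injOn)).image _

/-- relevant constructable values of infinite sorts. -/
def RC : Set (Fin S.numSorts × ℤ) :=
  {p | ¬ Finite (Term S p.1) ∧ p.2 ∈ RelVal β VS p.1 ∧
    ∃ f, S.ctorRes f = p.1 ∧ ExCtorSpec M f p.2}

theorem RC_finite (hVS : VS.Finite) : (RC M β VS).Finite := by
  refine Set.Finite.subset (Set.finite_iUnion
    (fun σ : Fin S.numSorts => ((Set.finite_singleton σ).prod (relVal_finite β VS hVS σ)))) ?_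
  rintro ⟨τ, w⟩ h
  exact Set.mem_iUnion.mpr ⟨τ, ⟨rfl, h.2.1⟩⟩

/-- the rank of a value: the number of relevant constructable values of smaller depth. -/
noncomputable def rankv (σ : Fin S.numSorts) (v : ℤ) : ℕ :=
  (RC M β VS ∩ {p | M.depthF p.1 p.2 < M.depthF σ v}).ncard

theorem rankv_lt (hVS : VS.Finite) {τ : Fin S.numSorts} {w : ℤ} {σ : Fin S.numSorts} {v : ℤ}
    (hmem : (τ, w) ∈ RC M β VS) (hd : M.depthF τ w < M.depthF σ v) :
    rankv M β VS τ w < rankv M β VS σ v := by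
  apply Set.ncard_lt_ncard
  · constructor
    · rintro ⟨p1, p2⟩ ⟨h1, h2⟩
      exact ⟨h1, lt_trans h2 hd⟩
    · intro hsub
      have h2 : (τ, w) ∈ RC M β VS ∩ {p | M.depthF p.1 p.2 < M.depthF τ w} :=
        hsub ⟨hmem, hd⟩
      have h3 : M.depthF τ w < M.depthF τ w := h2.2
      exact lt_irrefl _ h3
  · exact (RC_finite M β VS hVS).inter_of_left _

theorem rankv_le (hVS : VS.Finite) (σ : Fin S.numSorts) (v : ℤ) :
    rankv M β VS σ v ≤ (RC M β VS).ncard :=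
  Set.ncard_le_ncard Set.inter_subset_left (RC_finite M β VS hVS)

/-- total rank bound. -/
noncomputable def Ktot : ℕ := (RC M β VS).ncard + 1

/-- a term of an infinite sort of depth greater than a bound. -/
noncomputable def chooseDeep (σ : Fin S.numSorts) (b : ℕ) : Term S σ :=
  haveI := Classical.dec (Finite (Term S σ))
  if h : Finite (Term S σ) then (hS σ).some else (exists_depth_gt σ h b).choose

theorem depth_chooseDeep {σ : Fin S.numSorts} (hinf : ¬ Finite (Term S σ)) (b : ℕ) :
    b < (chooseDeep hS σ b).depth := by
  haveI := Classical.dec (Finite (Term S σ))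
  unfold chooseDeep
  rw [dif_neg hinf]
  exact (exists_depth_gt σ hinf b).choose_spec

/-- bounds used for choosing the depths of the fallback terms. -/
noncomputable def auxB : ℕ → ℕ
  | 0 => Dbase S + Ktot M β VS + 1
  | (i+1) => auxB i + Ktot M β VS + 1 +
      (if h : i % S.numSorts < S.numSorts
        then (chooseDeep hS ⟨i % S.numSorts, h⟩ (auxB i)).depth else 0)

theorem auxB_step (i : ℕ) : auxB hS M β VS i + Ktot M β VS + 1 ≤ auxB hS M β VS (i+1) := by
  show _ ≤ auxB hS M β VS i + Ktot M β VS + 1 + _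
  omega

theorem auxB_mono {i j : ℕ} (h : i < j) :
    auxB hS M β VS i + Ktot M β VS + 1 ≤ auxB hS M β VS j := by
  induction j with
  | zero => omega
  | succ j ih =>
    rcases Nat.lt_succ_iff_lt_or_eq.mp h with h' | h'
    · have h1 := ih h'
      have h2 := auxB_step hS M β VS j
      omega
    · subst h'
      exact auxB_step hS M β VS i

theorem auxB_covers {σ : Fin S.numSorts} (hinf : ¬ Finite (Term S σ)) (m : ℕ) :
    (chooseDeep hS σ (auxB hS M β VS (m * S.numSorts + σ.val))).depth + Ktot M β VS
      < auxB hS M β VS (m * S.numSorts + σ.val + 1) := by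
  set i := m * S.numSorts + σ.val with hi
  have hlt : i % S.numSorts < S.numSorts := by
    have : 0 < S.numSorts := σ.pos
    exact Nat.mod_lt _ this
  have hmod : i % S.numSorts = σ.val := by
    rw [hi, Nat.mul_comm, Nat.mul_add_mod]
    exact Nat.mod_eq_of_lt σ.isLt
  have hfin : (⟨i % S.numSorts, hlt⟩ : Fin S.numSorts) = σ := Fin.ext hmod
  show _ < auxB hS M β VS i + Ktot M β VS + 1 + _
  rw [dif_pos hlt]
  rw [hfin]
  omega

/-- fallback terms of infinite sorts, with spaced depths. -/
noncomputable def leafT (σ : Fin S.numSorts) (m : ℕ) : Term S σ :=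
  chooseDeep hS σ (auxB hS M β VS (m * S.numSorts + σ.val))

theorem leafT_depth_big {σ : Fin S.numSorts} (hinf : ¬ Finite (Term S σ)) (m : ℕ) :
    Dbase S + Ktot M β VS < (leafT hS M β VS σ m).depth := by
  have h1 := depth_chooseDeep hS hinf (auxB hS M β VS (m * S.numSorts + σ.val))
  have h2 : auxB hS M β VS 0 ≤ auxB hS M β VS (m * S.numSorts + σ.val) := by
    rcases Nat.eq_zero_or_pos (m * S.numSorts + σ.val) with h | h
    · rw [h]
    · have := auxB_mono hS M β VS h
      omega
  show Dbase S + Ktot M β VS < _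
  have h0 : auxB hS M β VS 0 = Dbase S + Ktot M β VS + 1 := rfl
  unfold leafT
  omega

/-- spacing of the fallback depths. -/
theorem leafT_spaced {σ τ : Fin S.numSorts} (hσ : ¬ Finite (Term S σ)) (hτ : ¬ Finite (Term S τ))
    {m m' : ℕ} (hne : m * S.numSorts + σ.val ≠ m' * S.numSorts + τ.val) :
    (leafT hS M β VS σ m).depth + Ktot M β VS < (leafT hS M β VS τ m').depth ∨
    (leafT hS M β VS τ m').depth + Ktot M β VS < (leafT hS M β VS σ m).depth := by
  rcases Nat.lt_or_ge (m * S.numSorts + σ.val) (m' * S.numSorts + τ.val) with h | h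
  · left
    have h1 := auxB_covers hS M β VS hσ m
    have h2 : auxB hS M β VS (m * S.numSorts + σ.val + 1)
        ≤ auxB hS M β VS (m' * S.numSorts + τ.val) := by
      rcases Nat.lt_or_ge (m * S.numSorts + σ.val + 1) (m' * S.numSorts + τ.val) with h' | h'
      · have := auxB_mono hS M β VS h'
        omega
      · have : m * S.numSorts + σ.val + 1 = m' * S.numSorts + τ.val := by omega
        rw [this]
    have h3 := depth_chooseDeep hS hτ (auxB hS M β VS (m' * S.numSorts + τ.val))
    unfold leafT
    omega
  · right
    have h' : m' * S.numSorts + τ.val < m * S.numSorts + σ.val := by omega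
    have h1 := auxB_covers hS M β VS hτ m'
    have h2 : auxB hS M β VS (m' * S.numSorts + τ.val + 1)
        ≤ auxB hS M β VS (m * S.numSorts + σ.val) := by
      rcases Nat.lt_or_ge (m' * S.numSorts + τ.val + 1) (m * S.numSorts + σ.val) with h'' | h''
      · have := auxB_mono hS M β VS h''
        omega
      · have : m' * S.numSorts + τ.val + 1 = m * S.numSorts + σ.val := by omega
        rw [this]
    have h3 := depth_chooseDeep hS hσ (auxB hS M β VS (m * S.numSorts + σ.val))
    unfold leafT
    omega

/-- the fallback assignment. -/
noncomputable def leafF (σ : Fin S.numSorts) (v : ℤ) : Term S σ :=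
  leafT hS M β VS σ (Encodable.encode v)

theorem leafF_inj {σ : Fin S.numSorts} (hinf : ¬ Finite (Term S σ)) {v w : ℤ}
    (h : leafF hS M β VS σ v = leafF hS M β VS σ w) : v = w := by
  by_contra hne
  have henc : Encodable.encode v ≠ Encodable.encode w :=
    fun hc => hne (Encodable.encode_injective hc)
  have hne' : Encodable.encode v * S.numSorts + σ.val
      ≠ Encodable.encode w * S.numSorts + σ.val := by
    intro hc
    apply henc
    have hpos : 0 < S.numSorts := σ.pos
    exact Nat.eq_of_mul_eq_mul_right hpos (by omega)
  have hsp := leafT_spaced hS M β VS hinf hinf hne'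
  unfold leafF at h
  rw [h] at hsp
  omega

end Sound4
end ADTSig
namespace ADTSig
section Sound5
variable {S : ADTSig} {V : Fin S.numSorts → Type}
variable (hS : S.WellDefined) (M : RModel S)
variable (β : (σ : Fin S.numSorts) → V σ → ℤ) (VS : Set ((σ : Fin S.numSorts) × V σ))

theorem selF_depth_lt {M : RModel S} {f : Fin S.numCtors} {v : ℤ}
    (hex : ExCtorSpec M f v) (j : Fin (S.ctorArgs f).length) :
    M.depthF ((S.ctorArgs f).get j) (M.selF f j v) < M.depthF (S.ctorRes f) v := by
  obtain ⟨xs, _, _, _, h3⟩ := hex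
  rw [(h3 j).1]
  exact (h3 j).2

/-- the decoding of integers into terms, with fuel. -/
noncomputable def decode (TT : ∀ σ, ℤ → Term S σ) : ℕ → ∀ σ : Fin S.numSorts, ℤ → Term S σ
  | 0 => fun σ _ => (hS σ).some
  | (n+1) => fun σ v =>
      haveI := Classical.dec (Finite (Term S σ))
      haveI := Classical.dec ((σ, v) ∈ RC M β VS)
      if Finite (Term S σ) then TT σ v
      else if h : (σ, v) ∈ RC M β VS then
        mkCast h.2.2.choose h.2.2.choose_spec.1
          (fun j => decode TT n _ (M.selF h.2.2.choose j v))
      else leafF hS M β VS σ v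

theorem decode_fin (TT : ∀ σ, ℤ → Term S σ) {n : ℕ} (hn : 0 < n) (σ : Fin S.numSorts) (v : ℤ)
    (hfin : Finite (Term S σ)) : decode hS M β VS TT n σ v = TT σ v := by
  obtain ⟨k, rfl⟩ : ∃ k, n = k + 1 := ⟨n - 1, by omega⟩
  simp only [decode]
  rw [if_pos hfin]

theorem decode_leaf (TT : ∀ σ, ℤ → Term S σ) {n : ℕ} (hn : 0 < n) (σ : Fin S.numSorts) (v : ℤ)
    (hinf : ¬ Finite (Term S σ)) (hnot : (σ, v) ∉ RC M β VS) :
    decode hS M β VS TT n σ v = leafF hS M β VS σ v := by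
  obtain ⟨k, rfl⟩ : ∃ k, n = k + 1 := ⟨n - 1, by omega⟩
  simp only [decode]
  rw [if_neg hinf, dif_neg hnot]

theorem decode_forced (TT : ∀ σ, ℤ → Term S σ) (n : ℕ) {σ : Fin S.numSorts} {v : ℤ}
    (h : (σ, v) ∈ RC M β VS) (f : Fin S.numCtors) (hres : S.ctorRes f = σ)
    (hex : ExCtorSpec M f v) :
    decode hS M β VS TT (n+1) σ v
      = mkCast f hres (fun j => decode hS M β VS TT n _ (M.selF f j v)) := by
  have hcf : h.2.2.choose = f :=
    exCtorSpec_unique (h.2.2.choose_spec.1.trans hres.symm) h.2.2.choose_spec.2 hex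
  subst hcf
  simp only [decode]
  rw [if_neg h.1, dif_pos h]

/-- the final assignment of terms to integer values. -/
noncomputable def Tmap (TT : ∀ σ, ℤ → Term S σ) (σ : Fin S.numSorts) (v : ℤ) : Term S σ :=
  decode hS M β VS TT (rankv M β VS σ v + 2) σ v

theorem Tmap_fin (TT : ∀ σ, ℤ → Term S σ) {σ : Fin S.numSorts} (v : ℤ)
    (hfin : Finite (Term S σ)) : Tmap hS M β VS TT σ v = TT σ v :=
  decode_fin hS M β VS TT (by omega) σ v hfin

theorem Tmap_leaf (TT : ∀ σ, ℤ → Term S σ) {σ : Fin S.numSorts} (v : ℤ)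
    (hinf : ¬ Finite (Term S σ)) (hnot : (σ, v) ∉ RC M β VS) :
    Tmap hS M β VS TT σ v = leafF hS M β VS σ v :=
  decode_leaf hS M β VS TT (by omega) σ v hinf hnot

theorem decode_stab (TT : ∀ σ, ℤ → Term S σ) (hVS : VS.Finite) :
    ∀ (m : ℕ) (σ : Fin S.numSorts) (v : ℤ), rankv M β VS σ v + 2 ≤ m →
      decode hS M β VS TT m σ v = Tmap hS M β VS TT σ v := by
  intro m
  induction m using Nat.strong_induction_on with
  | _ m IH =>
    intro σ v hm
    rcases Nat.lt_or_ge (rankv M β VS σ v + 2) m with hlt | hge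
    · by_cases hfin : Finite (Term S σ)
      · rw [decode_fin hS M β VS TT (by omega) σ v hfin, Tmap_fin hS M β VS TT v hfin]
      · by_cases hrc : (σ, v) ∈ RC M β VS
        · obtain ⟨f, hres, hex⟩ := hrc.2.2
          obtain ⟨m', rfl⟩ : ∃ m', m = m' + 1 := ⟨m - 1, by omega⟩
          rw [decode_forced hS M β VS TT m' hrc f hres hex]
          rw [show Tmap hS M β VS TT σ v
            = decode hS M β VS TT (rankv M β VS σ v + 1 + 1) σ v from rfl]
          rw [decode_forced hS M β VS TT (rankv M β VS σ v + 1) hrc f hres hex]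
          refine mkCast_congr rfl hres hres (heq_of_eq ?_)
          funext j
          by_cases hkfin : Finite (Term S ((S.ctorArgs f).get j))
          · rw [decode_fin hS M β VS TT (by omega) _ _ hkfin,
              decode_fin hS M β VS TT (by omega) _ _ hkfin]
          · by_cases hkrc : ((S.ctorArgs f).get j, M.selF f j v) ∈ RC M β VS
            · have hdl : M.depthF ((S.ctorArgs f).get j) (M.selF f j v) < M.depthF σ v := by
                have := selF_depth_lt hex j
                rw [hres] at this
                exact this
              have hklt := rankv_lt M β VS hVS hkrc hdl
              rw [IH m' (by omega) _ _ (by omega),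
                IH (rankv M β VS σ v + 1) (by omega) _ _ (by omega)]
            · rw [decode_leaf hS M β VS TT (by omega) _ _ hkfin hkrc,
                decode_leaf hS M β VS TT (by omega) _ _ hkfin hkrc]
        · rw [decode_leaf hS M β VS TT (by omega) σ v hfin hrc,
            Tmap_leaf hS M β VS TT v hfin hrc]
    · have : m = rankv M β VS σ v + 2 := by omega
      rw [this]
      rfl

theorem Tmap_forced (TT : ∀ σ, ℤ → Term S σ) (hVS : VS.Finite) {σ : Fin S.numSorts} {v : ℤ}
    (h : (σ, v) ∈ RC M β VS) (f : Fin S.numCtors) (hres : S.ctorRes f = σ)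
    (hex : ExCtorSpec M f v) :
    Tmap hS M β VS TT σ v
      = mkCast f hres (fun j => Tmap hS M β VS TT _ (M.selF f j v)) := by
  rw [show Tmap hS M β VS TT σ v
    = decode hS M β VS TT (rankv M β VS σ v + 1 + 1) σ v from rfl]
  rw [decode_forced hS M β VS TT (rankv M β VS σ v + 1) h f hres hex]
  refine mkCast_congr rfl hres hres (heq_of_eq ?_)
  funext j
  by_cases hkfin : Finite (Term S ((S.ctorArgs f).get j))
  · rw [decode_fin hS M β VS TT (by omega) _ _ hkfin, Tmap_fin hS M β VS TT _ hkfin]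
  · by_cases hkrc : ((S.ctorArgs f).get j, M.selF f j v) ∈ RC M β VS
    · have hdl : M.depthF ((S.ctorArgs f).get j) (M.selF f j v) < M.depthF σ v := by
        have := selF_depth_lt hex j
        rw [hres] at this
        exact this
      have hklt := rankv_lt M β VS hVS hkrc hdl
      exact decode_stab hS M β VS TT hVS (rankv M β VS σ v + 1) _ _ (by omega)
    · rw [decode_leaf hS M β VS TT (by omega) _ _ hkfin hkrc,
        Tmap_leaf hS M β VS TT _ hkfin hkrc]

/-- consistency of the assignment with constructor specifications, at relevant values. -/
theorem Tmap_cons (TT : ∀ σ, ℤ → Term S σ) (hVS : VS.Finite)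
    (hTT : ∀ σ, Finite (Term S σ) →
      Set.InjOn (TT σ) (window S σ) ∧
      ∀ v ∈ window S σ, ∀ f (hres : S.ctorRes f = σ), ExCtorSpec M f v →
        TT σ v = mkCast f hres (fun j => TT _ (M.selF f j v)))
    (f : Fin S.numCtors) (v : ℤ) (hIn : InSort S (S.ctorRes f) v)
    (hrel : v ∈ RelVal β VS (S.ctorRes f)) (hex : ExCtorSpec M f v) :
    Tmap hS M β VS TT (S.ctorRes f) v
      = Term.mk f (fun j => Tmap hS M β VS TT _ (M.selF f j v)) := by
  by_cases hfin : Finite (Term S (S.ctorRes f))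
  · rw [Tmap_fin hS M β VS TT v hfin,
      (hTT _ hfin).2 v (mem_window_of_inSort hIn hfin) f rfl hex, mkCast_rfl]
    refine congrArg (fun a => Term.mk f a) ?_
    funext j
    haveI hkfin : Finite (Term S ((S.ctorArgs f).get j)) := finite_arg hS hfin j
    rw [Tmap_fin hS M β VS TT _ hkfin]
  · have hrc : (S.ctorRes f, v) ∈ RC M β VS := ⟨hfin, hrel, f, rfl, hex⟩
    rw [Tmap_forced hS M β VS TT hVS hrc f rfl hex, mkCast_rfl]

end Sound5
end ADTSig
namespace ADTSig
section Sound6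
variable {S : ADTSig} {V : Fin S.numSorts → Type}
variable (hS : S.WellDefined) (M : RModel S)
variable (β : (σ : Fin S.numSorts) → V σ → ℤ) (VS : Set ((σ : Fin S.numSorts) × V σ))

/-- depth estimate for forced values. -/
theorem Tmap_depth_est (TT : ∀ σ, ℤ → Term S σ) (hVS : VS.Finite)
    (hTT : ∀ σ, Finite (Term S σ) →
      Set.InjOn (TT σ) (window S σ) ∧
      ∀ v ∈ window S σ, ∀ f (hres : S.ctorRes f = σ), ExCtorSpec M f v →
        TT σ v = mkCast f hres (fun j => TT _ (M.selF f j v))) :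
    ∀ (n : ℕ) (σ : Fin S.numSorts) (v : ℤ), (σ, v) ∈ RC M β VS → rankv M β VS σ v ≤ n →
      (Tmap hS M β VS TT σ v).depth ≤ Dbase S + rankv M β VS σ v + 1 ∨
      ∃ (τ : Fin S.numSorts) (m : ℕ), ¬ Finite (Term S τ) ∧
        (leafT hS M β VS τ m).depth < (Tmap hS M β VS TT σ v).depth ∧
        (Tmap hS M β VS TT σ v).depth ≤ (leafT hS M β VS τ m).depth + rankv M β VS σ v + 1 := by
  intro n
  induction n using Nat.strong_induction_on with
  | _ n IH =>
    intro σ v hrc hn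
    obtain ⟨f, hres, hex⟩ := hrc.2.2
    rw [Tmap_forced hS M β VS TT hVS hrc f hres hex, depth_mkCast]
    set G := Finset.univ.sup
      (fun j : Fin (S.ctorArgs f).length => (Tmap hS M β VS TT _ (M.selF f j v)).depth) with hG
    rcases Nat.lt_or_ge (Dbase S + rankv M β VS σ v) G with hbig | hsmall
    · -- the sup is attained at some argument
      have hne : (Finset.univ : Finset (Fin (S.ctorArgs f).length)).Nonempty := by
        rcases Finset.eq_empty_or_nonempty (Finset.univ : Finset (Fin (S.ctorArgs f).length))
          with he | hne
        · rw [hG, he] at hbig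
          simp at hbig
        · exact hne
      obtain ⟨j, _, hj⟩ := Finset.exists_mem_eq_sup Finset.univ hne
        (fun j : Fin (S.ctorArgs f).length => (Tmap hS M β VS TT _ (M.selF f j v)).depth)
      rw [← hG] at hj
      by_cases hkfin : Finite (Term S ((S.ctorArgs f).get j))
      · exfalso
        rw [Tmap_fin hS M β VS TT _ hkfin] at hj
        have := depth_le_Dbase hkfin (TT _ (M.selF f j v))
        omega
      · by_cases hkrc : ((S.ctorArgs f).get j, M.selF f j v) ∈ RC M β VS
        · have hdl : M.depthF ((S.ctorArgs f).get j) (M.selF f j v) < M.depthF σ v := by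
            have := selF_depth_lt hex j
            rw [hres] at this
            exact this
          have hklt := rankv_lt M β VS hVS hkrc hdl
          rcases IH (rankv M β VS ((S.ctorArgs f).get j) (M.selF f j v)) (by omega) _ _
            hkrc (le_refl _) with hL | ⟨τ, m, hτ, hlow, hhigh⟩
          · exfalso
            omega
          · right
            exact ⟨τ, m, hτ, by omega, by omega⟩
        · right
          rw [Tmap_leaf hS M β VS TT _ hkfin hkrc] at hj
          refine ⟨(S.ctorArgs f).get j, Encodable.encode (M.selF f j v), hkfin, ?_, ?_⟩
          · show (leafT hS M β VS _ _).depth < G + 1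
            have hdep : (leafF hS M β VS ((S.ctorArgs f).get j) (M.selF f j v)).depth
              = (leafT hS M β VS ((S.ctorArgs f).get j)
                  (Encodable.encode (M.selF f j v))).depth := rfl
            omega
          · show G + 1 ≤ (leafT hS M β VS _ _).depth + rankv M β VS σ v + 1
            have hdep : (leafF hS M β VS ((S.ctorArgs f).get j) (M.selF f j v)).depth
              = (leafT hS M β VS ((S.ctorArgs f).get j)
                  (Encodable.encode (M.selF f j v))).depth := rfl
            omega
    · left
      omega

/-- two leaf terms with equal depths are equal (same index). -/
theorem leafT_eq_of_index {σ τ : Fin S.numSorts} {m m' : ℕ}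
    (h : m * S.numSorts + σ.val = m' * S.numSorts + τ.val) :
    σ = τ ∧ m = m' := by
  have hσ := σ.isLt
  have hτ := τ.isLt
  have hmod : σ.val = τ.val := by
    have h1 : (m * S.numSorts + σ.val) % S.numSorts = σ.val := by
      rw [Nat.mul_comm, Nat.mul_add_mod]
      exact Nat.mod_eq_of_lt hσ
    have h2 : (m' * S.numSorts + τ.val) % S.numSorts = τ.val := by
      rw [Nat.mul_comm, Nat.mul_add_mod]
      exact Nat.mod_eq_of_lt hτ
    rw [← h1, ← h2, h]
  refine ⟨Fin.ext hmod, ?_⟩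
  have hpos : 0 < S.numSorts := σ.pos
  rw [hmod] at h
  exact Nat.eq_of_mul_eq_mul_right hpos (by omega)

/-- a forced term is never equal to a leaf term. -/
theorem Tmap_ne_leaf (TT : ∀ σ, ℤ → Term S σ) (hVS : VS.Finite)
    (hTT : ∀ σ, Finite (Term S σ) →
      Set.InjOn (TT σ) (window S σ) ∧
      ∀ v ∈ window S σ, ∀ f (hres : S.ctorRes f = σ), ExCtorSpec M f v →
        TT σ v = mkCast f hres (fun j => TT _ (M.selF f j v)))
    {σ : Fin S.numSorts} {v : ℤ} (hrc : (σ, v) ∈ RC M β VS)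
    {τ : Fin S.numSorts} (hτ : ¬ Finite (Term S τ)) (m : ℕ) :
    (Tmap hS M β VS TT σ v).depth ≠ (leafT hS M β VS τ m).depth := by
  intro hd
  have hKle : rankv M β VS σ v + 1 ≤ Ktot M β VS := by
    have := rankv_le M β VS hVS σ v
    unfold Ktot
    omega
  rcases Tmap_depth_est hS M β VS TT hVS hTT (rankv M β VS σ v) σ v hrc (le_refl _)
    with hL | ⟨τ', m', hτ', hlow, hhigh⟩
  · have hbig := leafT_depth_big hS M β VS hτ m
    omega
  · by_cases hidx : m' * S.numSorts + τ'.val = m * S.numSorts + τ.val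
    · obtain ⟨hst, hmm⟩ := leafT_eq_of_index hidx
      subst hst
      subst hmm
      omega
    · rcases leafT_spaced hS M β VS hτ' hτ hidx with hsp | hsp
      · omega
      · omega

/-- injectivity of the assignment on in-sort values. -/
theorem Tmap_inj (TT : ∀ σ, ℤ → Term S σ) (hVS : VS.Finite)
    (hTT : ∀ σ, Finite (Term S σ) →
      Set.InjOn (TT σ) (window S σ) ∧
      ∀ v ∈ window S σ, ∀ f (hres : S.ctorRes f = σ), ExCtorSpec M f v →
        TT σ v = mkCast f hres (fun j => TT _ (M.selF f j v))) :
    ∀ (σ : Fin S.numSorts) (v w : ℤ), InSort S σ v → InSort S σ w →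
      Tmap hS M β VS TT σ v = Tmap hS M β VS TT σ w → v = w := by
  classical
  set meas : Fin S.numSorts → ℤ → ℕ := fun σ v =>
    if (σ, v) ∈ RC M β VS then rankv M β VS σ v + 1 else 0 with hmeas
  suffices H : ∀ (n : ℕ) (σ : Fin S.numSorts) (v w : ℤ), meas σ v + meas σ w ≤ n →
      InSort S σ v → InSort S σ w →
      Tmap hS M β VS TT σ v = Tmap hS M β VS TT σ w → v = w by
    intro σ v w hv hw heq
    exact H (meas σ v + meas σ w) σ v w (le_refl _) hv hw heq
  intro n
  induction n using Nat.strong_induction_on with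
  | _ n IH =>
    intro σ v w hn hv hw heq
    by_cases hfin : Finite (Term S σ)
    · rw [Tmap_fin hS M β VS TT v hfin, Tmap_fin hS M β VS TT w hfin] at heq
      exact (hTT σ hfin).1 (mem_window_of_inSort hv hfin) (mem_window_of_inSort hw hfin) heq
    · by_cases hvrc : (σ, v) ∈ RC M β VS <;> by_cases hwrc : (σ, w) ∈ RC M β VS
      · -- both forced
        obtain ⟨f, hresf, hexf⟩ := hvrc.2.2
        obtain ⟨g, hresg, hexg⟩ := hwrc.2.2
        rw [Tmap_forced hS M β VS TT hVS hvrc f hresf hexf,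
          Tmap_forced hS M β VS TT hVS hwrc g hresg hexg] at heq
        have hfg : f = g := mkCast_head_eq hresf hresg heq
        subst hfg
        have hargs := mkCast_inj hresf hresg heq
        refine val_eq_of_exCtorSpec hexf hexg ?_
        intro j
        have hkv : InSort S ((S.ctorArgs f).get j) (M.selF f j v) := selF_inSort hexf j
        have hkw : InSort S ((S.ctorArgs f).get j) (M.selF f j w) := selF_inSort hexg j
        have hkm : meas ((S.ctorArgs f).get j) (M.selF f j v)
            + meas ((S.ctorArgs f).get j) (M.selF f j w) < n := by
          have hmv : meas σ v = rankv M β VS σ v + 1 := by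
            rw [hmeas]; simp only [if_pos hvrc]
          have hmw : meas σ w = rankv M β VS σ w + 1 := by
            rw [hmeas]; simp only [if_pos hwrc]
          have hbv : meas ((S.ctorArgs f).get j) (M.selF f j v) ≤ rankv M β VS σ v := by
            rw [hmeas]
            by_cases hk : ((S.ctorArgs f).get j, M.selF f j v) ∈ RC M β VS
            · simp only [if_pos hk]
              have hdl : M.depthF ((S.ctorArgs f).get j) (M.selF f j v) < M.depthF σ v := by
                have := selF_depth_lt hexf j
                rw [hresf] at this
                exact this
              have := rankv_lt M β VS hVS hk hdl
              omega
            · simp only [if_neg hk]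
              omega
          have hbw : meas ((S.ctorArgs f).get j) (M.selF f j w) ≤ rankv M β VS σ w := by
            rw [hmeas]
            by_cases hk : ((S.ctorArgs f).get j, M.selF f j w) ∈ RC M β VS
            · simp only [if_pos hk]
              have hdl : M.depthF ((S.ctorArgs f).get j) (M.selF f j w) < M.depthF σ w := by
                have := selF_depth_lt hexg j
                rw [hresg] at this
                exact this
              have := rankv_lt M β VS hVS hk hdl
              omega
            · simp only [if_neg hk]
              omega
          omega
        exact IH _ hkm _ _ _ (le_refl _) hkv hkw (congrFun hargs j)
      · -- v forced, w leaf : impossible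
        exfalso
        have hleaf : Tmap hS M β VS TT σ w = leafT hS M β VS σ (Encodable.encode w) :=
          Tmap_leaf hS M β VS TT w hfin hwrc
        have := Tmap_ne_leaf hS M β VS TT hVS hTT hvrc hfin (Encodable.encode w)
        rw [heq, hleaf] at this
        exact this rfl
      · -- w forced, v leaf : impossible
        exfalso
        have hleaf : Tmap hS M β VS TT σ v = leafT hS M β VS σ (Encodable.encode v) :=
          Tmap_leaf hS M β VS TT v hfin hvrc
        have := Tmap_ne_leaf hS M β VS TT hVS hTT hwrc hfin (Encodable.encode v)
        rw [← heq, hleaf] at this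
        exact this rfl
      · -- both leaves
        rw [Tmap_leaf hS M β VS TT v hfin hvrc, Tmap_leaf hS M β VS TT w hfin hwrc] at heq
        exact leafF_inj hS M β VS hfin heq

end Sound6
end ADTSig
namespace ADTSig
section Sound7
variable {S : ADTSig} {V : Fin S.numSorts → Type}
variable (hS : S.WellDefined) (M : RModel S)
variable (β : (σ : Fin S.numSorts) → V σ → ℤ) (VS : Set ((σ : Fin S.numSorts) × V σ))

open Classical in
/-- selector interpretation induced by an assignment `T`. -/
noncomputable def selAux (T : ∀ σ, ℤ → Term S σ) (f : Fin S.numCtors)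
    (j : Fin (S.ctorArgs f).length) {σ : Fin S.numSorts} (t : Term S σ) :
    σ = S.ctorRes f → Term S ((S.ctorArgs f).get j) :=
  Term.casesOn (motive := fun σ' _ => σ' = S.ctorRes f → Term S ((S.ctorArgs f).get j)) t
    (fun g args h =>
      if hg : g = f then
        (hg ▸ args : ∀ i : Fin (S.ctorArgs f).length, Term S ((S.ctorArgs f).get i)) j
      else if hex : ∃ v, InSort S (S.ctorRes f) v ∧
          T (S.ctorRes f) v = mkCast g h args then
        T _ (M.selF f j hex.choose)
      else (hS ((S.ctorArgs f).get j)).some)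

theorem selAux_mk (T : ∀ σ, ℤ → Term S σ) (f : Fin S.numCtors)
    (j : Fin (S.ctorArgs f).length)
    (args : ∀ i : Fin (S.ctorArgs f).length, Term S ((S.ctorArgs f).get i)) :
    selAux hS M T f j (Term.mk f args) rfl = args j := by
  show (if hg : f = f then _ else _) = args j
  rw [dif_pos rfl]

open Classical in
theorem selAux_mkCast (T : ∀ σ, ℤ → Term S σ) (f : Fin S.numCtors)
    (j : Fin (S.ctorArgs f).length) (g : Fin S.numCtors) {σ : Fin S.numSorts}
    (hgr : S.ctorRes g = σ) (hσf : σ = S.ctorRes f)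
    (args : ∀ i : Fin (S.ctorArgs g).length, Term S ((S.ctorArgs g).get i)) :
    selAux hS M T f j (mkCast g hgr args) hσf =
      if hg : g = f then
        (hg ▸ args : ∀ i : Fin (S.ctorArgs f).length, Term S ((S.ctorArgs f).get i)) j
      else if hex : ∃ v, InSort S (S.ctorRes f) v ∧
          T (S.ctorRes f) v = mkCast g (hgr.trans hσf) args then
        T _ (M.selF f j hex.choose)
      else (hS ((S.ctorArgs f).get j)).some := by
  subst hgr
  rfl

end Sound7
end ADTSig
namespace ADTSig
section Sound8
variable {S : ADTSig} {V : Fin S.numSorts → Type}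
variable (hS : S.WellDefined) (M : RModel S)
variable (β : (σ : Fin S.numSorts) → V σ → ℤ) (VS : Set ((σ : Fin S.numSorts) × V σ))

/-- the selector interpretation induced by an assignment. -/
noncomputable def selI (T : ∀ σ, ℤ → Term S σ) : SelInterp S where
  sel := fun f j t => selAux hS M T f j t rfl
  sel_mk := fun f i args => selAux_mk hS M T f i args

theorem Tmap_cons_cast (TT : ∀ σ, ℤ → Term S σ) (hVS : VS.Finite)
    (hTT : ∀ σ, Finite (Term S σ) →
      Set.InjOn (TT σ) (window S σ) ∧
      ∀ v ∈ window S σ, ∀ f (hres : S.ctorRes f = σ), ExCtorSpec M f v →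
        TT σ v = mkCast f hres (fun j => TT _ (M.selF f j v)))
    (g : Fin S.numCtors) {σ : Fin S.numSorts} (hres : S.ctorRes g = σ) (v : ℤ)
    (hIn : InSort S σ v) (hrel : v ∈ RelVal β VS σ) (hex : ExCtorSpec M g v) :
    Tmap hS M β VS TT σ v = mkCast g hres (fun i => Tmap hS M β VS TT _ (M.selF g i v)) := by
  subst hres
  rw [mkCast_rfl]
  exact Tmap_cons hS M β VS TT hVS hTT g v hIn hrel hex

theorem lit_holds (TT : ∀ σ, ℤ → Term S σ) (hVS : VS.Finite)
    (hTT : ∀ σ, Finite (Term S σ) →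
      Set.InjOn (TT σ) (window S σ) ∧
      ∀ v ∈ window S σ, ∀ f (hres : S.ctorRes f = σ), ExCtorSpec M f v →
        TT σ v = mkCast f hres (fun j => TT _ (M.selF f j v)))
    (hIn : ∀ σ (x : V σ), InSort S σ (β σ x))
    (l : Lit S V) (hsub : l.lvars ⊆ VS) (hred : l.redHolds M β) :
    l.holds (selI hS M (Tmap hS M β VS TT)) (fun σ x => Tmap hS M β VS TT σ (β σ x)) := by
  classical
  cases l with
  | ctorEq f xs x0 =>
    have hred' : CtorSpec M f (β _ x0) (fun i => β _ (xs i)) := hred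
    have hex : ExCtorSpec M f (β _ x0) := ⟨fun i => β _ (xs i), fun j => hIn _ _, hred'⟩
    have hrel : β _ x0 ∈ RelVal β VS (S.ctorRes f) :=
      ⟨x0, hsub (Set.mem_insert _ _), rfl⟩
    have hT := Tmap_cons hS M β VS TT hVS hTT f (β _ x0) (hIn _ _) hrel hex
    show Term.mk f (fun i => Tmap hS M β VS TT _ (β _ (xs i))) = Tmap hS M β VS TT _ (β _ x0)
    rw [hT]
    refine congrArg (fun a => Term.mk f a) ?_
    funext j
    rw [(hred'.2.2 j).1]
  | selEq f j x y =>
    obtain ⟨hsel, g, hres, hexg⟩ := hred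
    have hrel : β _ x ∈ RelVal β VS (S.ctorRes f) :=
      ⟨x, hsub (Set.mem_insert _ _), rfl⟩
    have hT := Tmap_cons_cast hS M β VS TT hVS hTT g hres (β _ x) (hIn _ _) hrel hexg
    show selAux hS M (Tmap hS M β VS TT) f j (Tmap hS M β VS TT _ (β _ x)) rfl = Tmap hS M β VS TT _ (β _ y)
    rw [hT, selAux_mkCast]
    by_cases hg : g = f
    · subst hg
      rw [dif_pos rfl]
      show Tmap hS M β VS TT _ (M.selF g j (β _ x)) = Tmap hS M β VS TT _ (β _ y)
      rw [hsel]
    · rw [dif_neg hg]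
      have hexists : ∃ v, InSort S (S.ctorRes f) v ∧
          Tmap hS M β VS TT (S.ctorRes f) v = mkCast g (hres.trans rfl)
            (fun i => Tmap hS M β VS TT _ (M.selF g i (β _ x))) :=
        ⟨β _ x, hIn _ _, hT⟩
      rw [dif_pos hexists]
      obtain ⟨hInc, hTc⟩ := hexists.choose_spec
      have hcx : hexists.choose = β _ x := by
        apply Tmap_inj hS M β VS TT hVS hTT _ _ _ hInc (hIn _ _)
        rw [hTc, hT]
      rw [hcx, hsel]
  | tst f x =>
    have hex : ExCtorSpec M f (β _ x) := hred
    have hrel : β _ x ∈ RelVal β VS (S.ctorRes f) := ⟨x, hsub rfl, rfl⟩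
    have hT := Tmap_cons hS M β VS TT hVS hTT f (β _ x) (hIn _ _) hrel hex
    show (Tmap hS M β VS TT _ (β _ x)).head = f
    rw [hT, Term.head_mk]
  | ntst f x =>
    obtain ⟨g, hres, hne, hexg⟩ := hred
    have hrel : β _ x ∈ RelVal β VS (S.ctorRes f) := ⟨x, hsub rfl, rfl⟩
    have hT := Tmap_cons_cast hS M β VS TT hVS hTT g hres (β _ x) (hIn _ _) hrel hexg
    show (Tmap hS M β VS TT _ (β _ x)).head ≠ f
    rw [hT, head_mkCast]
    exact hne
  | eqv x y =>
    exact congrArg _ (hred : β _ x = β _ y)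
  | nev x y =>
    intro hc
    exact (hred : β _ x ≠ β _ y)
      (Tmap_inj hS M β VS TT hVS hTT _ _ _ (hIn _ _) (hIn _ _) hc)

end Sound8
section Sound9
variable {S : ADTSig} {V : Fin S.numSorts → Type}

theorem adtSat_of_redSat (hS : S.WellDefined) (φ : Formula S V) (h : φ.RedSat) : φ.ADTSat := by
  obtain ⟨M, β, hred, hIn⟩ := h
  have hVS : (φ.fvars).Finite := φ.fvars_finite
  obtain ⟨TT, hTT⟩ := lemmaFin hS M
  refine ⟨selI hS M (Tmap hS M β φ.fvars TT),
    fun σ x => Tmap hS M β φ.fvars TT σ (β σ x), ?_⟩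
  have H : ∀ ψ : Formula S V, ψ.redHolds M β → ψ.fvars ⊆ φ.fvars →
      ψ.holds (selI hS M (Tmap hS M β φ.fvars TT))
        (fun σ x => Tmap hS M β φ.fvars TT σ (β σ x)) := by
    intro ψ
    induction ψ with
    | fls => intro h _; exact h
    | lit l => intro h hsub; exact lit_holds hS M β φ.fvars TT hVS hTT hIn l hsub h
    | and ψ₁ ψ₂ ih₁ ih₂ =>
      intro h hsub
      exact ⟨ih₁ h.1 (fun p hp => hsub (Or.inl hp)), ih₂ h.2 (fun p hp => hsub (Or.inr hp))⟩
    | or ψ₁ ψ₂ ih₁ ih₂ =>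
      intro h hsub
      cases h with
      | inl h' => exact Or.inl (ih₁ h' (fun p hp => hsub (Or.inl hp)))
      | inr h' => exact Or.inr (ih₂ h' (fun p hp => hsub (Or.inr hp)))
  exact H φ hred subset_rfl

end Sound9
end ADTSig

open ADTSig in
/-- **Theorem 1.** The reduct `φ̃` of a flat ADT formula `φ` in NNF over a
well-defined ADT is satisfiable over EUF+LIA if and only if `φ` is
satisfiable over the ADT. -/
theorem reduction_sound_and_complete (S : ADTSig) (hS : S.WellDefined)
    (V : Fin S.numSorts → Type) (φ : Formula S V) :
    φ.RedSat ↔ φ.ADTSat :=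
  ⟨adtSat_of_redSat hS φ, redSat_of_adtSat hS φ⟩
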